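/- Let G be a finitely generated group with more than one end. Then there exists a uniform bound (depending only on the generating set) on the depth of dead ends of G. -/

import Mathlib

/-- The word length of `g` with respect to the generating set `X`. -/
noncomputable def wordLength {G : Type*} [Group G] (X : Set G) (g : G) : ℕ :=
  sInf {n | ∃ l : List G, l.length = n ∧ (∀ x ∈ l, x ∈ X ∨ x⁻¹ ∈ X) ∧ l.prod = g}

/-- `g` is a dead end with respect to `X`. -/
def IsDeadEnd {G : Type*} [Group G] (X : Set G) (g : G) : Prop :=
  ∀ x : G, (x ∈ X ∨ x⁻¹ ∈ X) → wordLength X (g * x) ≤ wordLength X g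

/-- The (unoriented) Cayley graph of `G` with respect to `X`. -/
def cayleyGraph {G : Type*} [Group G] (X : Set G) : SimpleGraph G where
  Adj a b := a ≠ b ∧ (a⁻¹ * b ∈ X ∨ b⁻¹ * a ∈ X)
  symm := ⟨fun _ _ h => ⟨h.1.symm, h.2.symm⟩⟩
  loopless := ⟨fun _ h => h.1 rfl⟩

namespace DeadEndAux

open SimpleGraph

variable {G : Type*} [Group G]

lemma exists_word {X : Set G} (hgen : Subgroup.closure X = ⊤) (g : G) :
    ∃ l : List G, (∀ x ∈ l, x ∈ X ∨ x⁻¹ ∈ X) ∧ l.prod = g := by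
  have hg : g ∈ Subgroup.closure X := by rw [hgen]; trivial
  induction hg using Subgroup.closure_induction with
  | mem x hx => exact ⟨[x], by simp [hx], by simp⟩
  | one => exact ⟨[], by simp, by simp⟩
  | mul x y _ _ hx hy =>
    obtain ⟨lx, hlx, hpx⟩ := hx
    obtain ⟨ly, hly, hpy⟩ := hy
    refine ⟨lx ++ ly, ?_, by rw [List.prod_append, hpx, hpy]⟩
    intro z hz
    rcases List.mem_append.mp hz with h | h
    exacts [hlx z h, hly z h]
  | inv x _ hx =>
    obtain ⟨l, hl, hp⟩ := hx
    refine ⟨(l.map fun y => y⁻¹).reverse, ?_, by rw [← hp]; exact (List.prod_inv_reverse l).symm⟩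
    intro z hz
    simp only [List.mem_reverse, List.mem_map] at hz
    obtain ⟨y, hy, rfl⟩ := hz
    rcases hl y hy with h | h
    · exact Or.inr (by simpa using h)
    · exact Or.inl h

lemma wl_le {X : Set G} {g : G} (l : List G) (hl : ∀ x ∈ l, x ∈ X ∨ x⁻¹ ∈ X)
    (hp : l.prod = g) : wordLength X g ≤ l.length :=
  Nat.sInf_le ⟨l, rfl, hl, hp⟩

lemma wl_spec {X : Set G} (hgen : Subgroup.closure X = ⊤) (g : G) :
    ∃ l : List G, l.length = wordLength X g ∧ (∀ x ∈ l, x ∈ X ∨ x⁻¹ ∈ X) ∧ l.prod = g := by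
  obtain ⟨l, hl, hp⟩ := exists_word hgen g
  have hne : {n | ∃ l : List G, l.length = n ∧ (∀ x ∈ l, x ∈ X ∨ x⁻¹ ∈ X) ∧
      l.prod = g}.Nonempty := ⟨l.length, l, rfl, hl, hp⟩
  exact Nat.sInf_mem hne

lemma wl_one {X : Set G} : wordLength X (1 : G) = 0 :=
  Nat.le_zero.mp (wl_le [] (by simp) (by simp))

lemma wl_mul_le {X : Set G} (hgen : Subgroup.closure X = ⊤) (a b : G) :
    wordLength X (a * b) ≤ wordLength X a + wordLength X b := by
  obtain ⟨la, h1a, h2a, h3a⟩ := wl_spec hgen a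
  obtain ⟨lb, h1b, h2b, h3b⟩ := wl_spec hgen b
  have := wl_le (X := X) (g := a * b) (la ++ lb)
    (by intro x hx; rcases List.mem_append.mp hx with h | h; exacts [h2a x h, h2b x h])
    (by rw [List.prod_append, h3a, h3b])
  simpa [h1a, h1b] using this

lemma wl_inv {X : Set G} (hgen : Subgroup.closure X = ⊤) (g : G) :
    wordLength X g⁻¹ = wordLength X g := by
  have key : ∀ a : G, wordLength X a⁻¹ ≤ wordLength X a := by
    intro a
    obtain ⟨l, h1, h2, h3⟩ := wl_spec hgen a
    have := wl_le (X := X) (g := a⁻¹) ((l.map fun y => y⁻¹).reverse)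
      (by
        intro z hz
        simp only [List.mem_reverse, List.mem_map] at hz
        obtain ⟨y, hy, rfl⟩ := hz
        rcases h2 y hy with h | h
        · exact Or.inr (by simpa using h)
        · exact Or.inl h)
      (by rw [← h3]; exact (List.prod_inv_reverse l).symm)
    simpa [h1] using this
  exact le_antisymm (key g) (by simpa using key g⁻¹)

lemma ball_finite {G : Type*} [Group G] (X : Finset G) (hgen : Subgroup.closure (X : Set G) = ⊤)
    (n : ℕ) : {g : G | wordLength (X : Set G) g ≤ n}.Finite := by
  induction n with
  | zero =>
    refine Set.Finite.subset (Set.finite_singleton 1) ?_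
    intro g hg
    simp only [Set.mem_setOf_eq] at hg
    obtain ⟨l, h1, h2, h3⟩ := wl_spec hgen g
    have : l.length = 0 := by omega
    have hl0 : l = [] := List.length_eq_zero_iff.mp this
    have : g = 1 := by rw [← h3, hl0, List.prod_nil]
    simp [this]
  | succ n ih =>
    have hS : ((X : Set G) ∪ (fun y => y⁻¹) '' (X : Set G)).Finite :=
      X.finite_toSet.union (X.finite_toSet.image _)
    refine Set.Finite.subset (ih.union (hS.biUnion (fun x _ => ih.image (fun a => a * x)))) ?_
    intro g hg
    simp only [Set.mem_setOf_eq] at hg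
    rcases Nat.lt_or_ge (wordLength (X : Set G) g) (n + 1) with h | h
    · exact Or.inl (by simpa using Nat.lt_succ_iff.mp h)
    · have heq : wordLength (X : Set G) g = n + 1 := le_antisymm hg h
      obtain ⟨l, h1, h2, h3⟩ := wl_spec hgen g
      have hlne : l ≠ [] := by
        intro hl; rw [hl] at h1; simp at h1; omega
      set x := l.getLast hlne with hx
      have hl' : l = l.dropLast ++ [x] := (List.dropLast_append_getLast hlne).symm
      have hxl : x ∈ l := List.getLast_mem hlne
      have hxS : x ∈ ((X : Set G) ∪ (fun y => y⁻¹) '' (X : Set G)) := by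
        rcases h2 x hxl with h' | h'
        · exact Set.mem_union_left _ h'
        · exact Set.mem_union_right _ ⟨x⁻¹, h', by simp⟩
      have hmem : g ∈ (fun a => a * x) '' {g : G | wordLength (X : Set G) g ≤ n} := by
        refine ⟨l.dropLast.prod, ?_, ?_⟩
        · have := wl_le (X := (X : Set G)) (g := l.dropLast.prod) l.dropLast
            (fun y hy => h2 y (List.dropLast_subset l hy)) rfl
          have hlen : l.dropLast.length = n := by
            have := l.length_dropLast
            omega
          simpa [Set.mem_setOf_eq, hlen] using this
        · show l.dropLast.prod * x = g
          rw [← h3]; conv_rhs => rw [hl']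
          rw [List.prod_append, List.prod_singleton]
      exact Or.inr (Set.mem_biUnion hxS hmem)

lemma cayley_preconnected (X : Finset G) (hgen : Subgroup.closure (X : Set G) = ⊤) :
    (cayleyGraph (X : Set G)).Preconnected := by
  have key : ∀ (l : List G), (∀ x ∈ l, x ∈ (X : Set G) ∨ x⁻¹ ∈ (X : Set G)) →
      ∀ a : G, (cayleyGraph (X : Set G)).Reachable a (a * l.prod) := by
    intro l
    induction l with
    | nil => intro _ a; simpa using Reachable.refl a
    | cons x tl ih =>
      intro hcond a
      have h1 : (cayleyGraph (X : Set G)).Reachable (a * x) ((a * x) * tl.prod) :=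
        ih (fun y hy => hcond y (List.mem_cons_of_mem _ hy)) (a * x)
      have h2 : (cayleyGraph (X : Set G)).Reachable a (a * x) := by
        by_cases hx1 : x = 1
        · rw [hx1, mul_one]
        · refine Adj.reachable (show _ ∧ _ from ⟨?_, ?_⟩)
          · intro h; exact hx1 (by simpa using h.symm)
          · have hx := hcond x (List.mem_cons_self (a := x) (l := tl))
            have e1 : a⁻¹ * (a * x) = x := by group
            have e2 : (a * x)⁻¹ * a = x⁻¹ := by group
            rw [e1, e2]; exact hx
      have : a * (x :: tl).prod = (a * x) * tl.prod := by
        rw [List.prod_cons, mul_assoc]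
      rw [this]
      exact h2.trans h1
  intro a b
  obtain ⟨l, hl, hp⟩ := exists_word hgen (a⁻¹ * b)
  have := key l hl a
  rwa [hp, mul_inv_cancel_left] at this

lemma mem_of_word_avoid (X : Finset G) {D T : Set G}
    (hD : ∀ u v : G, u ∈ D → v ∉ T → (cayleyGraph (X : Set G)).Adj u v → v ∈ D) :
    ∀ (l : List G) (a : G), (∀ x ∈ l, x ∈ (X : Set G) ∨ x⁻¹ ∈ (X : Set G)) →
      (∀ t, a * (l.take t).prod ∉ T) → a * l.prod ∈ D → a ∈ D := by
  intro l
  induction l with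
  | nil => intro a _ _ h; simpa using h
  | cons x tl ih =>
    intro a hcond hpre hmem
    have ha' : a * x ∈ D := by
      refine ih (a * x) (fun y hy => hcond y (List.mem_cons_of_mem _ hy)) ?_ ?_
      · intro t
        have := hpre (t + 1)
        simpa [List.take_succ_cons, mul_assoc] using this
      · simpa [mul_assoc] using hmem
    have haT : a ∉ T := by simpa using hpre 0
    by_cases hx1 : x = 1
    · simpa [hx1] using ha'
    · refine hD (a * x) a ha' haT (show _ ∧ _ from ⟨?_, ?_⟩)
      · intro h; exact hx1 (by simpa using h)
      · have hx := hcond x (List.mem_cons_self (a := x) (l := tl))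
        have e1 : (a * x)⁻¹ * a = x⁻¹ := by group
        have e2 : a⁻¹ * (a * x) = x := by group
        rw [e1, e2]
        exact hx.symm
      
lemma last_exit {V : Type*} {Γ : SimpleGraph V} {T : Set V} {a b : V} (w : Γ.Walk a b) :
    b ∉ T → ∃ (s : V) (w' : Γ.Walk s b), (∀ v ∈ w'.support, v ∉ T) ∧
      (s = a ∨ ∃ t ∈ T, Γ.Adj t s) := by
  induction w with
  | nil => intro hb; exact ⟨_, Walk.nil, by simpa using hb, Or.inl rfl⟩
  | @cons u c d adj w ih =>
    intro hb
    obtain ⟨s, w', hw', hs⟩ := ih hb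
    rcases hs with rfl | hs
    · by_cases haT : u ∈ T
      · exact ⟨s, w', hw', Or.inr ⟨u, haT, adj⟩⟩
      · refine ⟨u, Walk.cons adj w', ?_, Or.inl rfl⟩
        intro y hy
        rcases List.mem_cons.mp (by simpa [Walk.support_cons] using hy) with rfl | hy'
        · exact haT
        · exact hw' y hy'
    · exact ⟨s, w', hw', Or.inr hs⟩

lemma walk_ivt {V : Type*} {Γ : SimpleGraph V} (f : V → ℕ)
    (hf : ∀ u v : V, Γ.Adj u v → f v ≤ f u + 1) {a b : V} (w : Γ.Walk a b) (m : ℕ) :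
    f a ≤ m → m ≤ f b → ∃ v ∈ w.support, f v = m := by
  induction w with
  | nil => intro ha hb; exact ⟨_, by simp, le_antisymm ha hb⟩
  | @cons u v d adj w ih =>
    intro ha hb
    by_cases hu : f u = m
    · exact ⟨u, by simp, hu⟩
    · have hlt : f u < m := lt_of_le_of_ne ha hu
      have : f v ≤ m := by have := hf u v adj; omega
      obtain ⟨x, hx, hfx⟩ := ih this hb
      exact ⟨x, by simp [Walk.support_cons, hx], hfx⟩

lemma mem_of_walk_avoid {V : Type*} {Γ : SimpleGraph V} {D T : Set V}
    (hD : ∀ u v : V, u ∈ D → v ∉ T → Γ.Adj u v → v ∈ D) {a b : V} (w : Γ.Walk a b) :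
    (∀ v ∈ w.support, v ∉ T) → b ∈ D → a ∈ D := by
  induction w with
  | nil => intro _ hb; exact hb
  | @cons u v d adj w ih =>
    intro hT hb
    have hv : v ∈ D := ih (fun y hy => hT y (by simp [Walk.support_cons, hy])) hb
    exact hD v u hv (hT u (by simp [Walk.support_cons])) adj.symm

lemma end_componentCompl_infinite' {V : Type*} {Γ : SimpleGraph V} (e : Γ.end)
    (K : (Finset V)ᵒᵖ) : ((e.val K).supp : Set V).Infinite := by
  refine (e.val K).infinite_iff_in_all_ranges.mpr (fun L h => ?_)
  exact ⟨e.val (Opposite.op L), (e.prop (CategoryTheory.opHomOfLE h))⟩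

lemma exists_prefix {X : Set G} (hgen : Subgroup.closure X = ⊤) (z : G) (k : ℕ) :
    ∃ p : G, wordLength X p ≤ k ∧ wordLength X (p⁻¹ * z) ≤ wordLength X z - k := by
  obtain ⟨l, h1, h2, h3⟩ := wl_spec hgen z
  refine ⟨(l.take k).prod, ?_, ?_⟩
  · have := wl_le (l.take k) (fun y hy => h2 y (List.take_subset k l hy)) rfl
    have hlen := List.length_take_le k l
    omega
  · have hprod : (l.take k).prod * (l.drop k).prod = z := by
      rw [← List.prod_append, List.take_append_drop, h3]
    have := wl_le (l.drop k) (fun y hy => h2 y (List.drop_subset k l hy))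
      (show (l.drop k).prod = (l.take k).prod⁻¹ * z by rw [← hprod]; group)
    have hlen : (l.drop k).length = l.length - k := List.length_drop
    omega

end DeadEndAux

open DeadEndAux SimpleGraph in
/-- If a finitely generated group has more than one end, then there is a uniform
bound `N` (depending only on the generating set) on the depth of its dead ends:
every dead end `g` has some `h` at distance at most `N + 1` from `g` which lies
outside the ball of radius `wordLength X g` around the identity. -/
theorem dead_end_depth_bounded_of_more_than_one_end {G : Type*} [Group G]
    (X : Finset G) (hgen : Subgroup.closure (X : Set G) = ⊤)
    (hends : ∃ e₁ ∈ (cayleyGraph (X : Set G)).end, ∃ e₂ ∈ (cayleyGraph (X : Set G)).end,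
      e₁ ≠ e₂) :
    ∃ N : ℕ, ∀ g : G, IsDeadEnd (X : Set G) g →
      ∃ h : G, wordLength (X : Set G) (g⁻¹ * h) ≤ N + 1 ∧
        wordLength (X : Set G) g < wordLength (X : Set G) h := by
  classical
  obtain ⟨e₁, he₁, e₂, he₂, hne⟩ := hends
  obtain ⟨Kop, hKne⟩ := Function.ne_iff.mp hne
  set K₀ : Finset G := Kop.unop with hK₀def
  set R : ℕ := K₀.sup (wordLength (X : Set G)) with hRdef
  have hRK : ∀ k ∈ K₀, wordLength (X : Set G) k ≤ R := fun k hk => Finset.le_sup hk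
  refine ⟨4 * R, ?_⟩
  intro g _
  rcases le_or_gt (wordLength (X : Set G) g) (2 * R) with hsmall | hbig
  · -- g is close to the identity: take a geodesic prefix of length `wordLength (X : Set G) g + 1`.
    obtain ⟨z, hz⟩ : ∃ z : G, 2 * R < wordLength (X : Set G) z := by
      have hfin := ball_finite X hgen (2 * R)
      obtain ⟨v, hv⟩ := (e₁ (Opposite.op hfin.toFinset)).nonempty
      refine ⟨v, ?_⟩
      have hvn := ComponentCompl.notMem_of_mem (SetLike.mem_coe.mp hv)
      by_contra hcon
      push_neg at hcon
      exact hvn (by simpa [Set.Finite.mem_toFinset] using hcon)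
    obtain ⟨p, hp1, hp2⟩ := exists_prefix hgen z (wordLength (X : Set G) g + 1)
    have htri : wordLength (X : Set G) z ≤ wordLength (X : Set G) p + wordLength (X : Set G) (p⁻¹ * z) := by
      have := wl_mul_le hgen p (p⁻¹ * z)
      have e : p * (p⁻¹ * z) = z := by group
      rwa [e] at this
    have hple : wordLength (X : Set G) g < wordLength (X : Set G) p := by omega
    refine ⟨p, ?_, hple⟩
    have h1 : wordLength (X : Set G) (g⁻¹ * p) ≤ wordLength (X : Set G) g⁻¹ + wordLength (X : Set G) p := wl_mul_le hgen g⁻¹ p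
    rw [wl_inv hgen] at h1
    omega
  · -- g is far from the identity: use the separating set `g • K₀`.
    set T : Set G := (fun c => g * c) '' (K₀ : Set G) with hTdef
    have hT1 : ∀ p ∈ T, wordLength (X : Set G) (g⁻¹ * p) ≤ R := by
      rintro p ⟨k, hk, rfl⟩
      have e : g⁻¹ * (g * k) = k := by group
      rw [e]; exact hRK k hk
    have hT2 : ∀ p ∈ T, wordLength (X : Set G) g ≤ wordLength (X : Set G) p + R := by
      rintro p ⟨k, hk, rfl⟩
      show wordLength (X : Set G) g ≤ wordLength (X : Set G) (g * k) + R
      have h1 : wordLength (X : Set G) ((g * k) * k⁻¹) ≤ wordLength (X : Set G) (g * k) + wordLength (X : Set G) k⁻¹ := wl_mul_le hgen _ _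
      rw [wl_inv hgen] at h1
      have e : (g * k) * k⁻¹ = g := by group
      rw [e] at h1
      have := hRK k hk
      omega
    have hinf1 : ((e₁ Kop).supp : Set G).Infinite :=
      end_componentCompl_infinite' ⟨e₁, he₁⟩ Kop
    have hinf2 : ((e₂ Kop).supp : Set G).Infinite :=
      end_componentCompl_infinite' ⟨e₂, he₂⟩ Kop
    have hdisjC : Disjoint ((e₁ Kop).supp : Set G) ((e₂ Kop).supp : Set G) :=
      ComponentCompl.pairwise_disjoint hKne
    obtain ⟨C, hCinf, hC1⟩ : ∃ C : (cayleyGraph (X : Set G)).ComponentCompl (K₀ : Set G),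
        (C : Set G).Infinite ∧ (1 : G) ∉ (fun c => g * c) '' (C : Set G) := by
      by_cases h1 : (1 : G) ∈ (fun c => g * c) '' ((e₁ Kop).supp : Set G)
      · refine ⟨e₂ Kop, hinf2, ?_⟩
        rintro ⟨c, hc, hgc⟩
        obtain ⟨c', hc', hgc'⟩ := h1
        have hcc : c' = c := mul_left_cancel (hgc'.trans hgc.symm)
        exact Set.disjoint_left.mp hdisjC hc' (hcc ▸ hc)
      · exact ⟨e₁ Kop, hinf1, h1⟩
    set D : Set G := (fun c => g * c) '' (C : Set G) with hDdef
    have hDadj : ∀ u v : G, u ∈ D → v ∉ T → (cayleyGraph (X : Set G)).Adj u v → v ∈ D := by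
      rintro u v ⟨c, hc, rfl⟩ hvT hadj
      have hvK : g⁻¹ * v ∉ (K₀ : Set G) := by
        intro hk; exact hvT ⟨g⁻¹ * v, hk, by group⟩
      obtain ⟨hne', hor⟩ : g * c ≠ v ∧
          ((g * c)⁻¹ * v ∈ (X : Set G) ∨ v⁻¹ * (g * c) ∈ (X : Set G)) := hadj
      have hadj' : (cayleyGraph (X : Set G)).Adj c (g⁻¹ * v) := by
        show _ ∧ _
        refine ⟨?_, ?_⟩
        · intro h; apply hne'; rw [h]; group
        · have e1 : c⁻¹ * (g⁻¹ * v) = (g * c)⁻¹ * v := by group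
          have e2 : (g⁻¹ * v)⁻¹ * c = v⁻¹ * (g * c) := by group
          rw [e1, e2]; exact hor
      exact ⟨g⁻¹ * v, ComponentCompl.mem_of_adj c (g⁻¹ * v) (SetLike.mem_coe.mp hc) hvK hadj',
        by group⟩
    have hDT : ∀ v ∈ D, v ∉ T := by
      rintro v ⟨c, hc, rfl⟩ ⟨k, hk, hgk⟩
      have hkc : k = c := mul_left_cancel hgk
      exact ComponentCompl.notMem_of_mem (SetLike.mem_coe.mp hc) (hkc ▸ hk)
    have hsep : ∀ h ∈ D, wordLength (X : Set G) g + wordLength (X : Set G) (g⁻¹ * h) ≤ wordLength (X : Set G) h + 2 * R := by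
      intro h hh
      obtain ⟨l, hlen, hlcond, hlprod⟩ := wl_spec hgen h
      have hpre : ∃ t : ℕ, (1 : G) * (l.take t).prod ∈ T := by
        by_contra hall
        push_neg at hall
        exact hC1 (mem_of_word_avoid X hDadj l 1 hlcond hall (by rw [one_mul, hlprod]; exact hh))
      obtain ⟨t, ht⟩ := hpre
      rw [one_mul] at ht
      set p : G := (l.take t).prod with hpdef
      have hp1 : wordLength (X : Set G) p ≤ (l.take t).length :=
        wl_le _ (fun y hy => hlcond y (List.take_subset t l hy)) rfl
      have hp2 : wordLength (X : Set G) (p⁻¹ * h) ≤ (l.drop t).length := by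
        refine wl_le _ (fun y hy => hlcond y (List.drop_subset t l hy)) ?_
        have hph : p * (l.drop t).prod = h := by
          rw [hpdef, ← List.prod_append, List.take_append_drop, hlprod]
        rw [← hph]; group
      have hlen2 : (l.take t).length + (l.drop t).length = wordLength (X : Set G) h := by
        rw [← List.length_append, List.take_append_drop, hlen]
      have hd1 := hT1 p ht
      have hd2 := hT2 p ht
      have htri : wordLength (X : Set G) (g⁻¹ * h) ≤ wordLength (X : Set G) (g⁻¹ * p) + wordLength (X : Set G) (p⁻¹ * h) := by
        have := wl_mul_le hgen (g⁻¹ * p) (p⁻¹ * h)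
        have e : (g⁻¹ * p) * (p⁻¹ * h) = g⁻¹ * h := by group
        rwa [e] at this
      omega
    have hDinf : D.Infinite := hCinf.image (Set.injOn_of_injective (mul_right_injective g))
    obtain ⟨h', hh'⟩ : ∃ h', h' ∈ D \ ((fun c => g * c) '' {v : G | wordLength (X : Set G) v ≤ 2 * R}) :=
      (hDinf.diff ((ball_finite X hgen (2 * R)).image _)).nonempty
    obtain ⟨hh'D, hh'n⟩ := hh'
    have hh'far : 2 * R + 1 ≤ wordLength (X : Set G) (g⁻¹ * h') := by
      by_contra hcon
      push_neg at hcon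
      exact hh'n ⟨g⁻¹ * h', by simpa [Set.mem_setOf_eq] using Nat.lt_succ_iff.mp hcon, by group⟩
    obtain ⟨w⟩ := cayley_preconnected X hgen g h'
    obtain ⟨s, w', hw'T, hs⟩ := last_exit w (hDT h' hh'D)
    have hstep : ∀ u v : G, (cayleyGraph (X : Set G)).Adj u v → wordLength (X : Set G) (g⁻¹ * v) ≤ wordLength (X : Set G) (g⁻¹ * u) + 1 := by
      intro u v hadj
      obtain ⟨-, hor⟩ : u ≠ v ∧ (u⁻¹ * v ∈ (X : Set G) ∨ v⁻¹ * u ∈ (X : Set G)) := hadj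
      have h1 : wordLength (X : Set G) (u⁻¹ * v) ≤ 1 := by
        refine wl_le [u⁻¹ * v] ?_ (by simp)
        intro y hy
        rw [List.mem_singleton] at hy
        subst hy
        rcases hor with h | h
        · exact Or.inl h
        · refine Or.inr ?_
          have e : (u⁻¹ * v)⁻¹ = v⁻¹ * u := by group
          rw [e]; exact h
      have h2 := wl_mul_le hgen (g⁻¹ * u) (u⁻¹ * v)
      have e : (g⁻¹ * u) * (u⁻¹ * v) = g⁻¹ * v := by group
      rw [e] at h2
      omega
    have hsd : wordLength (X : Set G) (g⁻¹ * s) ≤ R + 1 := by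
      rcases hs with heq | ⟨t, htT, hadj⟩
      · rw [heq]
        have e : g⁻¹ * g = (1 : G) := by group
        rw [e, wl_one]
        omega
      · obtain ⟨-, hor⟩ : t ≠ s ∧ (t⁻¹ * s ∈ (X : Set G) ∨ s⁻¹ * t ∈ (X : Set G)) := hadj
        have h1 : wordLength (X : Set G) (t⁻¹ * s) ≤ 1 := by
          refine wl_le [t⁻¹ * s] ?_ (by simp)
          intro y hy
          rw [List.mem_singleton] at hy
          subst hy
          rcases hor with h | h
          · exact Or.inl h
          · refine Or.inr ?_
            have e : (t⁻¹ * s)⁻¹ = s⁻¹ * t := by group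
            rw [e]; exact h
        have h2 := wl_mul_le hgen (g⁻¹ * t) (t⁻¹ * s)
        have e : (g⁻¹ * t) * (t⁻¹ * s) = g⁻¹ * s := by group
        rw [e] at h2
        have := hT1 t htT
        omega
    obtain ⟨h, hhsup, hhval⟩ := walk_ivt (fun v => wordLength (X : Set G) (g⁻¹ * v)) hstep w' (2 * R + 1)
      (show wordLength (X : Set G) (g⁻¹ * s) ≤ 2 * R + 1 by omega)
      (show 2 * R + 1 ≤ wordLength (X : Set G) (g⁻¹ * h') from hh'far)
    have hhval' : wordLength (X : Set G) (g⁻¹ * h) = 2 * R + 1 := hhval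
    have hhD : h ∈ D := by
      refine mem_of_walk_avoid hDadj (w'.dropUntil h hhsup) ?_ hh'D
      intro y hy
      exact hw'T y (Walk.support_dropUntil_subset w' hhsup hy)
    have hfin := hsep h hhD
    exact ⟨h, by omega, by omega⟩
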